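/- (Calderón-type reproducing identity) Let φ : ℝ → ℝ be a Schwartz function and N ≥ 1 an integer. Define ψ₀(λ) := Σ_{m=1}^{N} C(N,m) φ(λ)^{2m-1} (1 - φ(λ)²)^{N-m} and ψ(λ) := [φ(λ) + φ(2λ)] Σ_{m=1}^{N} C(N,m) [φ(λ)² - φ(2λ)²]^{m-1} (1 - φ(λ)²)^{N-m}. If φ(0) = 1, then for all λ ∈ ℝ, ψ₀(λ) φ(λ) + Σ_{k=1}^{∞} ψ(2^{-k}λ)[φ(2^{-k}λ) - φ(2^{-k+1}λ)] = 1, with the series converging absolutely. Moreover ψ₀(0) = 1 and ψ^{(ν)}(0) = 0 for ν = 0, 1, ..., N-2 when φ is smooth. -/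

import Mathlib

open Finset

private lemma natLeTop' {n : ℕ} : (n : WithTop ℕ∞) ≤ ((⊤ : ℕ∞) : WithTop ℕ∞) := by
  exact_mod_cast le_top

private lemma oneLeTop' : (1 : WithTop ℕ∞) ≤ ((⊤ : ℕ∞) : WithTop ℕ∞) := by
  exact_mod_cast (le_top : (1 : ℕ∞) ≤ ⊤)

private lemma binom_aux (N : ℕ) (u v : ℝ) :
    ∑ m ∈ Finset.Icc 1 N, (N.choose m : ℝ) * u ^ m * v ^ (N - m) = (u + v) ^ N - v ^ N := by
  have h : (u + v) ^ N = ∑ m ∈ Finset.range (N + 1), u ^ m * v ^ (N - m) * (N.choose m : ℝ) :=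
    add_pow u v N
  have h0 : (0 : ℕ) ∈ Finset.range (N + 1) := Finset.mem_range.mpr (Nat.succ_pos N)
  rw [Finset.sum_eq_sum_sdiff_singleton_add h0] at h
  have hset : Finset.range (N + 1) \ {0} = Finset.Icc 1 N := by
    ext a
    simp only [Finset.mem_sdiff, Finset.mem_range, Finset.mem_singleton, Finset.mem_Icc]
    omega
  rw [hset] at h
  simp only [pow_zero, Nat.sub_zero, Nat.choose_zero_right, Nat.cast_one, one_mul, mul_one] at h
  have hcg : ∑ m ∈ Finset.Icc 1 N, (N.choose m : ℝ) * u ^ m * v ^ (N - m)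
      = ∑ m ∈ Finset.Icc 1 N, u ^ m * v ^ (N - m) * (N.choose m : ℝ) := by
    apply Finset.sum_congr rfl; intro m _; ring
  rw [hcg]
  linarith

private lemma iteratedDeriv_zero_fun' (n : ℕ) :
    iteratedDeriv n (fun _ : ℝ => (0 : ℝ)) = fun _ => 0 := by
  induction n with
  | zero => simp [iteratedDeriv_zero]
  | succ n ih =>
    rw [iteratedDeriv_succ, ih]
    funext x
    simp

private lemma iteratedDeriv_add_apply' {j : ℕ} {A B : ℝ → ℝ} (hA : ContDiff ℝ (⊤ : ℕ∞) A)
    (hB : ContDiff ℝ (⊤ : ℕ∞) B) :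
    iteratedDeriv j (fun x => A x + B x) 0 = iteratedDeriv j A 0 + iteratedDeriv j B 0 := by
  simp only [← iteratedDerivWithin_univ]
  exact iteratedDerivWithin_add (Set.mem_univ 0) uniqueDiffOn_univ
    ((hA.of_le natLeTop').contDiffWithinAt) ((hB.of_le natLeTop').contDiffWithinAt)

private lemma vanish_mul :
    ∀ (j : ℕ) (k m : ℕ) (f g : ℝ → ℝ), ContDiff ℝ (⊤ : ℕ∞) f → ContDiff ℝ (⊤ : ℕ∞) g →
      (∀ i, i < k → iteratedDeriv i f 0 = 0) → (∀ i, i < m → iteratedDeriv i g 0 = 0) →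
      j < k + m → iteratedDeriv j (fun x => f x * g x) 0 = 0 := by
  intro j
  induction j with
  | zero =>
    intro k m f g hf hg hfv hgv hlt
    simp only [iteratedDeriv_zero]
    by_cases hk : 0 < k
    · have h := hfv 0 hk
      simp only [iteratedDeriv_zero] at h
      simp [h]
    · have hm : 0 < m := by omega
      have h := hgv 0 hm
      simp only [iteratedDeriv_zero] at h
      simp [h]
  | succ j ih =>
    intro k m f g hf hg hfv hgv hlt
    have hf' : ContDiff ℝ (⊤ : ℕ∞) (deriv f) := (contDiff_infty_iff_deriv.mp hf).2
    have hg' : ContDiff ℝ (⊤ : ℕ∞) (deriv g) := (contDiff_infty_iff_deriv.mp hg).2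
    have hfd : Differentiable ℝ f := hf.differentiable (by simp)
    have hgd : Differentiable ℝ g := hg.differentiable (by simp)
    have hder : deriv (fun x => f x * g x) = fun x => deriv f x * g x + f x * deriv g x := by
      funext x
      exact deriv_mul (hfd x) (hgd x)
    rw [iteratedDeriv_succ', hder, iteratedDeriv_add_apply' (hf'.mul hg) (hf.mul hg')]
    have h1 : iteratedDeriv j (fun x => deriv f x * g x) 0 = 0 := by
      apply ih (k - 1) m _ _ hf' hg _ hgv (by omega)
      intro i hi
      have h := hfv (i + 1) (by omega)
      rwa [iteratedDeriv_succ'] at h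
    have h2 : iteratedDeriv j (fun x => f x * deriv g x) 0 = 0 := by
      apply ih k (m - 1) _ _ hf hg' hfv _ (by omega)
      intro i hi
      have h := hgv (i + 1) (by omega)
      rwa [iteratedDeriv_succ'] at h
    rw [h1, h2, add_zero]

private lemma vanish_pow (u : ℝ → ℝ) (hu : ContDiff ℝ (⊤ : ℕ∞) u) (hu0 : u 0 = 0) (a : ℕ) :
    ∀ i, i < a → iteratedDeriv i (fun x => u x ^ a) 0 = 0 := by
  induction a with
  | zero => intro i hi; omega
  | succ a ih =>
    intro i hi
    have hh : (fun x => u x ^ (a + 1)) = fun x => u x * u x ^ a := by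
      funext x; ring
    rw [hh]
    refine vanish_mul i 1 a u (fun x => u x ^ a) hu (hu.pow a) ?_ ih (by omega)
    intro i hi
    interval_cases i
    simpa [iteratedDeriv_zero] using hu0

private lemma vanish_sum {ι : Type*} [DecidableEq ι] (s : Finset ι) (F : ι → ℝ → ℝ) (K : ℕ)
    (hF : ∀ a ∈ s, ContDiff ℝ (⊤ : ℕ∞) (F a))
    (hv : ∀ a ∈ s, ∀ i, i < K → iteratedDeriv i (F a) 0 = 0) :
    ∀ i, i < K → iteratedDeriv i (fun x => ∑ a ∈ s, F a x) 0 = 0 := by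
  induction s using Finset.induction with
  | empty =>
    intro i hi
    simp only [Finset.sum_empty]
    rw [iteratedDeriv_zero_fun' i]
  | insert a s ha ih =>
    intro i hi
    have hsm : ContDiff ℝ (⊤ : ℕ∞) (fun x => ∑ b ∈ s, F b x) :=
      ContDiff.sum fun b hb => hF b (Finset.mem_insert_of_mem hb)
    have hsum : (fun x => ∑ b ∈ insert a s, F b x) = fun x => F a x + ∑ b ∈ s, F b x := by
      funext x
      rw [Finset.sum_insert ha]
    rw [hsum, iteratedDeriv_add_apply' (hF a (Finset.mem_insert_self a s)) hsm]
    rw [hv a (Finset.mem_insert_self a s) i hi,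
      ih (fun b hb => hF b (Finset.mem_insert_of_mem hb))
        (fun b hb => hv b (Finset.mem_insert_of_mem hb)) i hi, add_zero]

theorem calderon_reproducing (φ : SchwartzMap ℝ ℝ) (N : ℕ) (hN : 1 ≤ N)
    (hφ0 : φ 0 = 1)
    (ψ₀ ψ : ℝ → ℝ)
    (hψ₀ : ∀ l : ℝ, ψ₀ l = ∑ m ∈ Finset.Icc 1 N,
      (N.choose m : ℝ) * φ l ^ (2 * m - 1) * (1 - φ l ^ 2) ^ (N - m))
    (hψ : ∀ l : ℝ, ψ l = (φ l + φ (2 * l)) * ∑ m ∈ Finset.Icc 1 N,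
      (N.choose m : ℝ) * (φ l ^ 2 - φ (2 * l) ^ 2) ^ (m - 1) * (1 - φ l ^ 2) ^ (N - m)) :
    (∀ l : ℝ,
      HasSum (fun k : ℕ => ψ ((2 : ℝ) ^ (-(k : ℤ) - 1) * l) *
          (φ ((2 : ℝ) ^ (-(k : ℤ) - 1) * l) - φ ((2 : ℝ) ^ (-(k : ℤ)) * l)))
        (1 - ψ₀ l * φ l) ∧
      Summable (fun k : ℕ => |ψ ((2 : ℝ) ^ (-(k : ℤ) - 1) * l) *
          (φ ((2 : ℝ) ^ (-(k : ℤ) - 1) * l) - φ ((2 : ℝ) ^ (-(k : ℤ)) * l))|)) ∧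
    ψ₀ 0 = 1 ∧
    (∀ ν : ℕ, (ν : ℤ) ≤ (N : ℤ) - 2 → iteratedDeriv ν ψ 0 = 0) := by
  have φs : ContDiff ℝ (⊤ : ℕ∞) (φ : ℝ → ℝ) := φ.smooth ⊤
  -- key pointwise identity for ψ₀
  have hψ₀φ : ∀ l : ℝ, ψ₀ l * φ l = 1 - (1 - φ l ^ 2) ^ N := by
    intro l
    rw [hψ₀ l, Finset.sum_mul]
    have hcong : ∀ m ∈ Finset.Icc 1 N,
        (N.choose m : ℝ) * φ l ^ (2 * m - 1) * (1 - φ l ^ 2) ^ (N - m) * φ l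
          = (N.choose m : ℝ) * (φ l ^ 2) ^ m * (1 - φ l ^ 2) ^ (N - m) := by
      intro m hm
      rw [Finset.mem_Icc] at hm
      have h2m : 2 * m - 1 + 1 = 2 * m := by omega
      calc (N.choose m : ℝ) * φ l ^ (2 * m - 1) * (1 - φ l ^ 2) ^ (N - m) * φ l
          = (N.choose m : ℝ) * (φ l ^ (2 * m - 1) * φ l) * (1 - φ l ^ 2) ^ (N - m) := by ring
        _ = (N.choose m : ℝ) * (φ l ^ 2) ^ m * (1 - φ l ^ 2) ^ (N - m) := by
            rw [← pow_succ, h2m, pow_mul]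
    rw [Finset.sum_congr rfl hcong, binom_aux N (φ l ^ 2) (1 - φ l ^ 2),
      show φ l ^ 2 + (1 - φ l ^ 2) = 1 by ring, one_pow]
  -- key pointwise identity for ψ
  have hψφ : ∀ x : ℝ, ψ x * (φ x - φ (2 * x))
      = (1 - φ (2 * x) ^ 2) ^ N - (1 - φ x ^ 2) ^ N := by
    intro x
    rw [hψ x]
    have hcong : (φ x + φ (2 * x)) *
        (∑ m ∈ Finset.Icc 1 N, (N.choose m : ℝ) * (φ x ^ 2 - φ (2 * x) ^ 2) ^ (m - 1)
          * (1 - φ x ^ 2) ^ (N - m)) * (φ x - φ (2 * x))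
        = ∑ m ∈ Finset.Icc 1 N, (N.choose m : ℝ) * (φ x ^ 2 - φ (2 * x) ^ 2) ^ m
          * (1 - φ x ^ 2) ^ (N - m) := by
      rw [Finset.mul_sum, Finset.sum_mul]
      apply Finset.sum_congr rfl
      intro m hm
      rw [Finset.mem_Icc] at hm
      have hm1 : m - 1 + 1 = m := by omega
      calc (φ x + φ (2 * x)) * ((N.choose m : ℝ) * (φ x ^ 2 - φ (2 * x) ^ 2) ^ (m - 1)
            * (1 - φ x ^ 2) ^ (N - m)) * (φ x - φ (2 * x))
          = (N.choose m : ℝ) * ((φ x ^ 2 - φ (2 * x) ^ 2) ^ (m - 1)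
            * (φ x ^ 2 - φ (2 * x) ^ 2)) * (1 - φ x ^ 2) ^ (N - m) := by ring
        _ = (N.choose m : ℝ) * (φ x ^ 2 - φ (2 * x) ^ 2) ^ m * (1 - φ x ^ 2) ^ (N - m) := by
            rw [← pow_succ, hm1]
    rw [hcong, binom_aux N (φ x ^ 2 - φ (2 * x) ^ 2) (1 - φ x ^ 2),
      show φ x ^ 2 - φ (2 * x) ^ 2 + (1 - φ x ^ 2) = 1 - φ (2 * x) ^ 2 by ring]
  have hψ₀0 : ψ₀ 0 = 1 := by
    have h := hψ₀φ 0
    rw [hφ0, mul_one] at h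
    rw [h]
    simp [zero_pow (by omega : N ≠ 0)]
  refine ⟨?_, hψ₀0, ?_⟩
  · intro l
    set T : ℕ → ℝ := fun k => ψ ((2 : ℝ) ^ (-(k : ℤ) - 1) * l) *
        (φ ((2 : ℝ) ^ (-(k : ℤ) - 1) * l) - φ ((2 : ℝ) ^ (-(k : ℤ)) * l)) with hTdef
    set G : ℕ → ℝ := fun k => (1 - φ ((2 : ℝ) ^ (-(k : ℤ)) * l) ^ 2) ^ N with hGdef
    have hpow : ∀ k : ℕ, (2 : ℝ) ^ (-(k : ℤ)) = (1 / 2 : ℝ) ^ k := by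
      intro k
      rw [zpow_neg, zpow_natCast, one_div, inv_pow]
    have hTk : ∀ k : ℕ, T k = G k - G (k + 1) := by
      intro k
      have h2x : (2 : ℝ) * ((2 : ℝ) ^ (-(k : ℤ) - 1) * l) = (2 : ℝ) ^ (-(k : ℤ)) * l := by
        rw [← mul_assoc, ← zpow_one_add₀ (two_ne_zero),
          show (1 : ℤ) + (-(k : ℤ) - 1) = -(k : ℤ) by ring]
      have h := hψφ ((2 : ℝ) ^ (-(k : ℤ) - 1) * l)
      rw [h2x] at h
      have hcast : (2 : ℝ) ^ (-((k + 1 : ℕ) : ℤ)) = (2 : ℝ) ^ (-(k : ℤ) - 1) := by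
        congr 1
        push_cast
        ring
      simp only [hTdef, hGdef, hcast]
      exact h
    -- Lipschitz-type bound on q(x) = 1 - φ(x)^2 on [-|l|, |l|]
    have hqs : ContDiff ℝ (⊤ : ℕ∞) (fun x : ℝ => 1 - φ x ^ 2) := contDiff_const.sub (φs.pow 2)
    obtain ⟨C, hC0, hC⟩ : ∃ C : ℝ, 0 ≤ C ∧
        ∀ x ∈ Set.Icc (-|l|) |l|, |1 - φ x ^ 2| ≤ C * |x| := by
      have hcont : ContinuousOn (fun x => |deriv (fun x : ℝ => 1 - φ x ^ 2) x|)
          (Set.Icc (-|l|) (|l|)) :=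
        ((hqs.continuous_deriv oneLeTop').abs).continuousOn
      have h0mem : (0 : ℝ) ∈ Set.Icc (-|l|) (|l|) :=
        ⟨neg_nonpos.mpr (abs_nonneg l), abs_nonneg l⟩
      obtain ⟨z, hz, hzmax⟩ := isCompact_Icc.exists_isMaxOn ⟨0, h0mem⟩ hcont
      refine ⟨|deriv (fun x : ℝ => 1 - φ x ^ 2) z|, abs_nonneg _, ?_⟩
      intro x hx
      have hmvt := Convex.norm_image_sub_le_of_norm_deriv_le
        (f := fun x : ℝ => 1 - φ x ^ 2)
        (fun y _ => (hqs.differentiable (by simp)).differentiableAt)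
        (fun y hy => hzmax hy) (convex_Icc _ _) h0mem hx
      simpa [Real.norm_eq_abs, hφ0] using hmvt
    set D := (C * |l|) ^ N with hDdef
    have hD0 : 0 ≤ D := by positivity
    have hGb : ∀ k : ℕ, |G k| ≤ D * (1 / 2) ^ k := by
      intro k
      have hargabs : |(2 : ℝ) ^ (-(k : ℤ)) * l| = (1 / 2 : ℝ) ^ k * |l| := by
        rw [hpow, abs_mul, abs_of_pos (by positivity)]
      have hmem : (2 : ℝ) ^ (-(k : ℤ)) * l ∈ Set.Icc (-|l|) (|l|) := by
        rw [Set.mem_Icc, ← abs_le, hargabs]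
        calc (1 / 2 : ℝ) ^ k * |l| ≤ 1 * |l| := by
              apply mul_le_mul_of_nonneg_right _ (abs_nonneg l)
              exact pow_le_one₀ (by norm_num) (by norm_num)
          _ = |l| := one_mul _
      have h1 := hC _ hmem
      have hhalf1 : ((1 / 2 : ℝ) ^ k) ^ N ≤ (1 / 2 : ℝ) ^ k :=
        pow_le_of_le_one (by positivity) (pow_le_one₀ (by norm_num) (by norm_num)) (by omega)
      calc |G k| = |1 - φ ((2 : ℝ) ^ (-(k : ℤ)) * l) ^ 2| ^ N := by
            rw [hGdef]; exact abs_pow _ _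
        _ ≤ (C * |(2 : ℝ) ^ (-(k : ℤ)) * l|) ^ N :=
            pow_le_pow_left₀ (abs_nonneg _) h1 N
        _ = (C * |l|) ^ N * ((1 / 2 : ℝ) ^ k) ^ N := by
            rw [hargabs, show C * ((1 / 2 : ℝ) ^ k * |l|) = C * |l| * (1 / 2) ^ k by ring,
              mul_pow]
        _ ≤ D * (1 / 2) ^ k := by
            rw [hDdef]
            exact mul_le_mul_of_nonneg_left hhalf1 (by positivity)
    have hGsum : Summable (fun k => |G k|) :=
      Summable.of_nonneg_of_le (fun k => abs_nonneg _) hGb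
        (summable_geometric_two.mul_left D)
    have hTsum : Summable (fun k => |T k|) := by
      apply Summable.of_nonneg_of_le (fun k => abs_nonneg _) (fun k => ?_)
        (hGsum.add ((summable_nat_add_iff 1).mpr hGsum))
      rw [hTk k]
      simpa [sub_eq_add_neg, abs_neg] using abs_add_le (G k) (-(G (k + 1)))
    have hlim : Filter.Tendsto G Filter.atTop (nhds 0) := by
      have h2 : Filter.Tendsto (fun n : ℕ => (1 / 2 : ℝ) ^ n * l) Filter.atTop (nhds 0) := by
        simpa using
          (tendsto_pow_atTop_nhds_zero_of_lt_one (by norm_num : (0:ℝ) ≤ 1/2)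
            (by norm_num : (1/2:ℝ) < 1)).mul_const l
      have hcont : Continuous fun x : ℝ => (1 - φ x ^ 2) ^ N :=
        ((continuous_const.sub ((φ.continuous).pow 2)).pow N)
      have h3 := (hcont.tendsto 0).comp h2
      have hval : (1 - φ (0:ℝ) ^ 2) ^ N = 0 := by
        rw [hφ0]; simp [zero_pow (by omega : N ≠ 0)]
      rw [hval] at h3
      have hGeq : G = fun n : ℕ => (1 - φ ((1 / 2 : ℝ) ^ n * l) ^ 2) ^ N := by
        funext n
        rw [hGdef]
        simp only
        rw [hpow]
      rw [hGeq]
      exact h3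
    have hpartial : ∀ n, ∑ k ∈ Finset.range n, T k = G 0 - G n := by
      intro n
      calc ∑ k ∈ Finset.range n, T k = ∑ k ∈ Finset.range n, (G k - G (k + 1)) :=
            Finset.sum_congr rfl fun k _ => hTk k
        _ = G 0 - G n := Finset.sum_range_sub' G n
    have hsum : HasSum T (G 0) := by
      rw [hasSum_iff_tendsto_nat_of_summable_norm
        (by simpa [Real.norm_eq_abs] using hTsum)]
      simp only [hpartial]
      simpa using tendsto_const_nhds.sub hlim
    have hG0 : G 0 = (1 - φ l ^ 2) ^ N := by
      rw [hGdef]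
      norm_num
    constructor
    · rw [hψ₀φ l, show (1 : ℝ) - (1 - (1 - φ l ^ 2) ^ N) = (1 - φ l ^ 2) ^ N by ring, ← hG0]
      exact hsum
    · exact hTsum
  · intro ν hν
    have hνN : ν < N - 1 := by omega
    have h2c : ContDiff ℝ (⊤ : ℕ∞) (fun x : ℝ => 2 * x) := contDiff_const.mul contDiff_id
    have φ2 : ContDiff ℝ (⊤ : ℕ∞) (fun x : ℝ => φ (2 * x)) := φs.comp h2c
    have hu : ContDiff ℝ (⊤ : ℕ∞) (fun x : ℝ => φ x ^ 2 - φ (2 * x) ^ 2) :=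
      (φs.pow 2).sub (φ2.pow 2)
    have hv : ContDiff ℝ (⊤ : ℕ∞) (fun x : ℝ => 1 - φ x ^ 2) := contDiff_const.sub (φs.pow 2)
    have hu0 : φ (0:ℝ) ^ 2 - φ (2 * (0:ℝ)) ^ 2 = 0 := by
      rw [mul_zero, hφ0]; ring
    have hv0 : 1 - φ (0:ℝ) ^ 2 = 0 := by rw [hφ0]; ring
    have hψfun : ψ = fun x => (φ x + φ (2 * x)) * ∑ m ∈ Finset.Icc 1 N,
        (N.choose m : ℝ) * (φ x ^ 2 - φ (2 * x) ^ 2) ^ (m - 1) * (1 - φ x ^ 2) ^ (N - m) :=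
      funext hψ
    rw [hψfun]
    set F : ℕ → ℝ → ℝ := fun m x =>
      (N.choose m : ℝ) * (φ x ^ 2 - φ (2 * x) ^ 2) ^ (m - 1) * (1 - φ x ^ 2) ^ (N - m)
      with hFdef
    have hFs : ∀ m ∈ Finset.Icc 1 N, ContDiff ℝ (⊤ : ℕ∞) (F m) := by
      intro m _
      exact (contDiff_const.mul (hu.pow (m - 1))).mul (hv.pow (N - m))
    have hFv : ∀ m ∈ Finset.Icc 1 N, ∀ i, i < N - 1 → iteratedDeriv i (F m) 0 = 0 := by
      intro m hm i hi
      rw [Finset.mem_Icc] at hm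
      have hFm : F m = fun x => (N.choose m : ℝ) *
          ((φ x ^ 2 - φ (2 * x) ^ 2) ^ (m - 1) * (1 - φ x ^ 2) ^ (N - m)) := by
        funext x
        rw [hFdef]
        ring
      have hinner : ContDiff ℝ (⊤ : ℕ∞) (fun x : ℝ =>
          (φ x ^ 2 - φ (2 * x) ^ 2) ^ (m - 1) * (1 - φ x ^ 2) ^ (N - m)) :=
        (hu.pow (m - 1)).mul (hv.pow (N - m))
      have hcm : iteratedDeriv i (fun x => (N.choose m : ℝ) *
          ((φ x ^ 2 - φ (2 * x) ^ 2) ^ (m - 1) * (1 - φ x ^ 2) ^ (N - m))) 0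
          = (N.choose m : ℝ) * iteratedDeriv i (fun x : ℝ =>
            (φ x ^ 2 - φ (2 * x) ^ 2) ^ (m - 1) * (1 - φ x ^ 2) ^ (N - m)) 0 := by
        simp only [← iteratedDerivWithin_univ]
        exact iteratedDerivWithin_const_mul (Set.mem_univ 0) uniqueDiffOn_univ _
          ((hinner.of_le natLeTop').contDiffWithinAt)
      rw [hFm, hcm]
      have hz : iteratedDeriv i (fun x : ℝ =>
          (φ x ^ 2 - φ (2 * x) ^ 2) ^ (m - 1) * (1 - φ x ^ 2) ^ (N - m)) 0 = 0 := by
        apply vanish_mul i (m - 1) (N - m) _ _ (hu.pow (m - 1)) (hv.pow (N - m))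
          (vanish_pow _ hu hu0 (m - 1)) (vanish_pow _ hv hv0 (N - m)) (by omega)
      rw [hz, mul_zero]
    have hSs : ContDiff ℝ (⊤ : ℕ∞) (fun x => ∑ m ∈ Finset.Icc 1 N, F m x) :=
      ContDiff.sum hFs
    have hSv : ∀ i, i < N - 1 →
        iteratedDeriv i (fun x => ∑ m ∈ Finset.Icc 1 N, F m x) 0 = 0 :=
      vanish_sum (Finset.Icc 1 N) F (N - 1) hFs hFv
    exact vanish_mul ν 0 (N - 1) _ _ (φs.add φ2) hSs
      (fun i hi => absurd hi (Nat.not_lt_zero i)) hSv (by omega)
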